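/- arXiv:math/0701506 — 2 statements merged into one kernel-verified Lean document; each statement's English description precedes it below -/
import Mathlib

section
/- The linear map S₁ sending a linear map μ : ℝ³ → ℝ³ to the alternating bilinear map (v₁, v₂) ↦ 2 skw(v₁ μ(v₂)ᵀ − v₂ μ(v₁)ᵀ) with values in the skew-symmetric 3×3 matrices K is a linear bijection from Hom(ℝ³, ℝ³) onto the space of alternating K-valued bilinear forms on ℝ³, and its inverse satisfies, for every alternating K-valued bilinear form ω and all v₁, v₂, v₃ ∈ ℝ³: (S₁⁻¹ω)(v₁) · (v₂ × v₃) = (1/2)[vect(ω(v₂, v₃)) · v₁ − vect(ω(v₁, v₂)) · v₃ + vect(ω(v₁, v₃)) · v₂]. -/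
open Matrix

/-- The skew-symmetric part of a matrix: `skw F = (F − Fᵀ)/2`. -/
noncomputable def skw (F : Matrix (Fin 3) (Fin 3) ℝ) : Matrix (Fin 3) (Fin 3) ℝ :=
  (1 / 2 : ℝ) • (F - Fᵀ)

/-- The axial vector of a skew-symmetric 3×3 matrix: the unique `v` with
`W w = v × w` for all `w`. -/
noncomputable def vect (W : Matrix (Fin 3) (Fin 3) ℝ) : Fin 3 → ℝ :=
  ![W 2 1, W 0 2, W 1 0]

/-- The BGG operator `S₁`, sending a linear map `μ : ℝ³ → ℝ³` to the alternating
bilinear map `(v₁, v₂) ↦ 2 skw(v₁ μ(v₂)ᵀ − v₂ μ(v₁)ᵀ)` with values in the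
skew-symmetric 3×3 matrices. -/
noncomputable def S1 (μ : (Fin 3 → ℝ) →ₗ[ℝ] (Fin 3 → ℝ)) (v w : Fin 3 → ℝ) :
    Matrix (Fin 3) (Fin 3) ℝ :=
  (2 : ℝ) • skw (vecMulVec v (μ w) - vecMulVec w (μ v))

noncomputable def E (i : Fin 3) : Fin 3 → ℝ := fun j => if i = j then 1 else 0

theorem hS1entry (ν : (Fin 3 → ℝ) →ₗ[ℝ] (Fin 3 → ℝ)) (v w : Fin 3 → ℝ) (i j : Fin 3) :
    S1 ν v w i j = v i * ν w j - w i * ν v j - (v j * ν w i - w j * ν v i) := by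
  simp [S1, skw, vecMulVec, Matrix.transpose_apply]


set_option maxHeartbeats 1000000 in
private theorem part4 (ω : (Fin 3 → ℝ) →ₗ[ℝ] (Fin 3 → ℝ) →ₗ[ℝ] Matrix (Fin 3) (Fin 3) ℝ)
    (hskew : ∀ v w, (ω v w)ᵀ = -(ω v w)) (halt : ∀ v w, ω v w = -(ω w v)) : ∃! μ : (Fin 3 → ℝ) →ₗ[ℝ] (Fin 3 → ℝ),
          (∀ v w, S1 μ v w = ω v w) ∧
          ∀ v₁ v₂ v₃ : Fin 3 → ℝ,
            (μ v₁) ⬝ᵥ (crossProduct v₂ v₃) =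
              (1 / 2 : ℝ) * ((vect (ω v₂ v₃)) ⬝ᵥ v₁ - (vect (ω v₁ v₂)) ⬝ᵥ v₃ +
                (vect (ω v₁ v₃)) ⬝ᵥ v₂) := by
  have hdiag : ∀ v w (i : Fin 3), ω v w i i = 0 := by
    intro v w i
    have h := congrFun (congrFun (hskew v w) i) i
    simp [Matrix.transpose_apply] at h
    linarith
  have h01 : ∀ v w, ω v w 0 1 = -(ω v w 1 0) := by
    intro v w
    have h := congrFun (congrFun (hskew v w) 1) 0
    simpa [Matrix.transpose_apply] using h
  have h20 : ∀ v w, ω v w 2 0 = -(ω v w 0 2) := by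
    intro v w
    have h := congrFun (congrFun (hskew v w) 0) 2
    simpa [Matrix.transpose_apply] using h
  have h12 : ∀ v w, ω v w 1 2 = -(ω v w 2 1) := by
    intro v w
    have h := congrFun (congrFun (hskew v w) 2) 1
    simpa [Matrix.transpose_apply] using h
  have gpp : ∀ v, ω v v = 0 := by
    intro v
    ext i j
    have h' := congrFun (congrFun (halt v v) i) j
    simp [Matrix.neg_apply] at h'
    simp
    linarith
  have g10 : ω (E 1) (E 0) = -(ω (E 0) (E 1)) := halt _ _
  have g20 : ω (E 2) (E 0) = -(ω (E 0) (E 2)) := halt _ _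
  have g21 : ω (E 2) (E 1) = -(ω (E 1) (E 2)) := halt _ _
  have hexp : ∀ v w, ω v w = ∑ p : Fin 3, ∑ q : Fin 3, (v p * w q) • ω (E p) (E q) := by
    intro v w
    have h1 : ω v w = ∑ p : Fin 3, v p • ω (E p) w := by
      conv_lhs => rw [LinearMap.pi_apply_eq_sum_univ ω v]
      rw [LinearMap.sum_apply]
      exact Finset.sum_congr rfl fun p _ => rfl
    rw [h1]
    refine Finset.sum_congr rfl fun p _ => ?_
    rw [LinearMap.pi_apply_eq_sum_univ (ω (E p)) w, Finset.smul_sum]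
    refine Finset.sum_congr rfl fun q _ => ?_
    rw [smul_smul]
    rfl
  have hexpE : ∀ v w (i j : Fin 3), ω v w i j
      = ∑ p : Fin 3, ∑ q : Fin 3, v p * w q * ω (E p) (E q) i j := by
    intro v w i j
    rw [hexp v w]
    simp [Matrix.sum_apply]
  set V : Fin 3 → Fin 3 → Fin 3 → ℝ := fun p q => vect (ω (E p) (E q)) with hV
  set M : Matrix (Fin 3) (Fin 3) ℝ := fun l m =>
    (1/2 : ℝ) * (V (![1,2,0] l) (![2,0,1] l) m - V m (![1,2,0] l) (![2,0,1] l)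
      + V m (![2,0,1] l) (![1,2,0] l)) with hM
  set μ : (Fin 3 → ℝ) →ₗ[ℝ] (Fin 3 → ℝ) := Matrix.toLin' M with hμdef
  have hμ : ∀ v, μ v = M *ᵥ v := fun v => Matrix.toLin'_apply M v
  have hA : ∀ v w, S1 μ v w = ω v w := by
    intro v w
    ext i j
    rw [hS1entry, hμ, hμ]
    fin_cases i <;> fin_cases j <;>
      rw [hexpE v w] <;>
      simp [Matrix.mulVec, dotProduct, Fin.sum_univ_three, hM, hV, vect, gpp, g10, g20, g21,
        h01, h20, h12, hdiag, Matrix.neg_apply, Matrix.zero_apply, Matrix.cons_val_zero,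
        Matrix.cons_val_one, Matrix.head_cons, Matrix.cons_val_two, Matrix.tail_cons,
        Matrix.cons_val_fin_one, Fin.isValue, Fin.zero_eta, Fin.mk_one, Fin.reduceFinMk] <;>
      ring
  have hB : ∀ v₁ v₂ v₃ : Fin 3 → ℝ,
      (μ v₁) ⬝ᵥ (crossProduct v₂ v₃) =
        (1 / 2 : ℝ) * ((vect (ω v₂ v₃)) ⬝ᵥ v₁ - (vect (ω v₁ v₂)) ⬝ᵥ v₃ +
          (vect (ω v₁ v₃)) ⬝ᵥ v₂) := by
    intro v₁ v₂ v₃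
    rw [cross_apply]
    simp only [vect, hμ]
    rw [hexpE v₂ v₃ 2 1, hexpE v₂ v₃ 0 2, hexpE v₂ v₃ 1 0,
        hexpE v₁ v₂ 2 1, hexpE v₁ v₂ 0 2, hexpE v₁ v₂ 1 0,
        hexpE v₁ v₃ 2 1, hexpE v₁ v₃ 0 2, hexpE v₁ v₃ 1 0]
    simp [Matrix.mulVec, dotProduct, Fin.sum_univ_three, hM, hV, vect, gpp, g10, g20, g21,
      h01, h20, h12, hdiag, Matrix.neg_apply, Matrix.zero_apply]
    ring
  have hc0 : crossProduct (E 1) (E 2) = E 0 := by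
    funext r; rw [cross_apply]; fin_cases r <;> simp [E]
  have hc1 : crossProduct (E 2) (E 0) = E 1 := by
    funext r; rw [cross_apply]; fin_cases r <;> simp [E]
  have hc2 : crossProduct (E 0) (E 1) = E 2 := by
    funext r; rw [cross_apply]; fin_cases r <;> simp [E]
  refine ⟨μ, ⟨hA, hB⟩, ?_⟩
  rintro μ' ⟨-, hf⟩
  apply LinearMap.ext
  intro v
  funext l
  fin_cases l
  · have h1 := hf v (E 1) (E 2)
    have h2 := hB v (E 1) (E 2)
    rw [hc0] at h1 h2
    simp [dotProduct, Fin.sum_univ_three, E] at h1 h2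
    show μ' v 0 = μ v 0
    linarith
  · have h1 := hf v (E 2) (E 0)
    have h2 := hB v (E 2) (E 0)
    rw [hc1] at h1 h2
    simp [dotProduct, Fin.sum_univ_three, E] at h1 h2
    show μ' v 1 = μ v 1
    linarith
  · have h1 := hf v (E 0) (E 1)
    have h2 := hB v (E 0) (E 1)
    rw [hc2] at h1 h2
    simp [dotProduct, Fin.sum_univ_three, E] at h1 h2
    show μ' v 2 = μ v 2
    linarith

/-- `S₁` is a linear bijection from `Hom(ℝ³, ℝ³)` onto the space of alternating
`K`-valued bilinear forms on `ℝ³` (where `K` is the skew-symmetric 3×3 matrices),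
and its inverse satisfies
`(S₁⁻¹ω)(v₁) · (v₂ × v₃) = ½[vect(ω(v₂,v₃))·v₁ − vect(ω(v₁,v₂))·v₃ + vect(ω(v₁,v₃))·v₂]`. -/
theorem S1_bijective_with_inverse_formula :
    -- S₁ is linear in μ
    (∀ (μ₁ μ₂ : (Fin 3 → ℝ) →ₗ[ℝ] (Fin 3 → ℝ)) (v w : Fin 3 → ℝ),
        S1 (μ₁ + μ₂) v w = S1 μ₁ v w + S1 μ₂ v w) ∧
    (∀ (c : ℝ) (μ : (Fin 3 → ℝ) →ₗ[ℝ] (Fin 3 → ℝ)) (v w : Fin 3 → ℝ),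
        S1 (c • μ) v w = c • S1 μ v w) ∧
    -- S₁ μ is an alternating bilinear form with values in the skew matrices
    (∀ (μ : (Fin 3 → ℝ) →ₗ[ℝ] (Fin 3 → ℝ)) (v w : Fin 3 → ℝ),
        (S1 μ v w)ᵀ = -(S1 μ v w) ∧ S1 μ v w = -(S1 μ w v)) ∧
    -- S₁ is a bijection onto that space, with the stated inverse formula
    (∀ ω : (Fin 3 → ℝ) →ₗ[ℝ] (Fin 3 → ℝ) →ₗ[ℝ] Matrix (Fin 3) (Fin 3) ℝ,
        (∀ v w, (ω v w)ᵀ = -(ω v w)) → (∀ v w, ω v w = -(ω w v)) →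
        ∃! μ : (Fin 3 → ℝ) →ₗ[ℝ] (Fin 3 → ℝ),
          (∀ v w, S1 μ v w = ω v w) ∧
          ∀ v₁ v₂ v₃ : Fin 3 → ℝ,
            (μ v₁) ⬝ᵥ (crossProduct v₂ v₃) =
              (1 / 2 : ℝ) * ((vect (ω v₂ v₃)) ⬝ᵥ v₁ - (vect (ω v₁ v₂)) ⬝ᵥ v₃ +
                (vect (ω v₁ v₃)) ⬝ᵥ v₂)) := by
  refine ⟨?_, ?_, ?_, fun ω hskew halt => part4 ω hskew halt⟩
  · intro μ₁ μ₂ v w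
    ext i j
    simp [S1, skw, vecMulVec, Matrix.transpose_apply]
    ring
  · intro c μ v w
    ext i j
    simp [S1, skw, vecMulVec, Matrix.transpose_apply]
    ring
  · intro μ v w
    constructor <;> ext i j <;>
      simp [S1, skw, vecMulVec, Matrix.transpose_apply] <;> ring
end

section
/- Let X₀,…,X₃, Y₀,…,Y₃ be real vector spaces with differentials d_k : X_k → X_{k+1}, d̃_k : Y_k → Y_{k+1} satisfying d² = 0 and d̃² = 0, K_k : Y_k → X_k linear, S_k := d_k K_k − K_{k+1} d̃_k, and A_k(ω, μ) := (d_k ω − S_k μ, d̃_k μ). Assume S₁ : Y₁ → X₂ is surjective with a linear right inverse S† : X₂ → Y₁ (so S₁ ∘ S† = id on X₂). Define Γ¹ = {(ω, μ) ∈ X₁ × Y₁ : d₁ ω = S₁ μ}, Γ² = {0} × Y₂ ⊆ X₂ × Y₂, π¹(ω, μ) = (ω, μ − S†S₁μ + S†d₁ω), and π²(ω, μ) = (0, μ + d̃₁ S† ω). Then: (i) A₀ maps X₀ × Y₀ into Γ¹, A₁ maps Γ¹ into Γ²; (ii) π¹ maps X₁ × Y₁ onto Γ¹ and restricts to the identity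 on Γ¹, π² maps X₂ × Y₂ onto Γ² and restricts to the identity on Γ²; (iii) π¹ ∘ A₀ = A₀, π² ∘ A₁ = A₁ ∘ π¹, and A₂ ∘ π² = A₂; and (iv) if the complex X₀×Y₀ → X₁×Y₁ → X₂×Y₂ → X₃×Y₃ with maps A_k is exact at degrees 1 and 2, then the subcomplex X₀×Y₀ →^{A₀} Γ¹ →^{A₁} Γ² →^{A₂} X₃×Y₃ is exact at Γ¹ and at Γ². -/
/-- The abstract discrete elasticity complex theorem: given two complexes `(X, d)`,
`(Y, e)` with `d² = 0`, `e² = 0`, connecting maps `K_k`, BGG operators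
`S_k = d_k K_k − K_{k+1} e_k`, twisted differentials `A_k(ω, μ) = (d_k ω − S_k μ, e_k μ)`,
and a linear right inverse `S†` of `S₁`, with
`Γ¹ = {(ω, μ) : d₁ ω = S₁ μ}`, `Γ² = {0} × Y₂`,
`π¹(ω, μ) = (ω, μ − S†S₁μ + S†d₁ω)`, `π²(ω, μ) = (0, μ + e₁ S† ω)`:
(i) `A₀` maps into `Γ¹` and `A₁` maps `Γ¹` into `Γ²`;
(ii) `π¹`, `π²` are projections onto `Γ¹`, `Γ²`;
(iii) `π¹A₀ = A₀`, `π²A₁ = A₁π¹`, `A₂π² = A₂`;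
(iv) exactness of the twisted complex at degrees 1 and 2 implies exactness of the
subcomplex at `Γ¹` and `Γ²`. -/
theorem discrete_BGG_subcomplex
    {X0 X1 X2 X3 Y0 Y1 Y2 Y3 : Type*}
    [AddCommGroup X0] [Module ℝ X0] [AddCommGroup X1] [Module ℝ X1]
    [AddCommGroup X2] [Module ℝ X2] [AddCommGroup X3] [Module ℝ X3]
    [AddCommGroup Y0] [Module ℝ Y0] [AddCommGroup Y1] [Module ℝ Y1]
    [AddCommGroup Y2] [Module ℝ Y2] [AddCommGroup Y3] [Module ℝ Y3]
    (d0 : X0 →ₗ[ℝ] X1) (d1 : X1 →ₗ[ℝ] X2) (d2 : X2 →ₗ[ℝ] X3)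
    (e0 : Y0 →ₗ[ℝ] Y1) (e1 : Y1 →ₗ[ℝ] Y2) (e2 : Y2 →ₗ[ℝ] Y3)
    (hd0 : d1 ∘ₗ d0 = 0) (hd1 : d2 ∘ₗ d1 = 0)
    (he0 : e1 ∘ₗ e0 = 0) (he1 : e2 ∘ₗ e1 = 0)
    (K0 : Y0 →ₗ[ℝ] X0) (K1 : Y1 →ₗ[ℝ] X1) (K2 : Y2 →ₗ[ℝ] X2) (K3 : Y3 →ₗ[ℝ] X3)
    (S0 : Y0 →ₗ[ℝ] X1) (S1 : Y1 →ₗ[ℝ] X2) (S2 : Y2 →ₗ[ℝ] X3)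
    (hS0 : S0 = d0 ∘ₗ K0 - K1 ∘ₗ e0)
    (hS1 : S1 = d1 ∘ₗ K1 - K2 ∘ₗ e1)
    (hS2 : S2 = d2 ∘ₗ K2 - K3 ∘ₗ e2)
    (Sdag : X2 →ₗ[ℝ] Y1) (hdag : S1 ∘ₗ Sdag = LinearMap.id)
    (A0 : X0 × Y0 → X1 × Y1) (hA0 : ∀ p, A0 p = (d0 p.1 - S0 p.2, e0 p.2))
    (A1 : X1 × Y1 → X2 × Y2) (hA1 : ∀ p, A1 p = (d1 p.1 - S1 p.2, e1 p.2))
    (A2 : X2 × Y2 → X3 × Y3) (hA2 : ∀ p, A2 p = (d2 p.1 - S2 p.2, e2 p.2))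
    (Γ1 : Set (X1 × Y1)) (hΓ1 : Γ1 = {p | d1 p.1 = S1 p.2})
    (Γ2 : Set (X2 × Y2)) (hΓ2 : Γ2 = {p | p.1 = 0})
    (π1 : X1 × Y1 → X1 × Y1)
    (hπ1 : ∀ p, π1 p = (p.1, p.2 - Sdag (S1 p.2) + Sdag (d1 p.1)))
    (π2 : X2 × Y2 → X2 × Y2)
    (hπ2 : ∀ p, π2 p = (0, p.2 + e1 (Sdag p.1))) :
    -- (i)
    ((∀ p : X0 × Y0, A0 p ∈ Γ1) ∧ (∀ p ∈ Γ1, A1 p ∈ Γ2)) ∧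
    -- (ii)
    ((∀ p : X1 × Y1, π1 p ∈ Γ1) ∧ (∀ p ∈ Γ1, π1 p = p) ∧
     (∀ p : X2 × Y2, π2 p ∈ Γ2) ∧ (∀ p ∈ Γ2, π2 p = p)) ∧
    -- (iii)
    ((∀ p : X0 × Y0, π1 (A0 p) = A0 p) ∧
     (∀ p : X1 × Y1, π2 (A1 p) = A1 (π1 p)) ∧
     (∀ p : X2 × Y2, A2 (π2 p) = A2 p)) ∧
    -- (iv)
    ((∀ p : X1 × Y1, A1 p = 0 ↔ ∃ q, A0 q = p) →
     (∀ p : X2 × Y2, A2 p = 0 ↔ ∃ q, A1 q = p) →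
     ((∀ p ∈ Γ1, (A1 p = 0 ↔ ∃ q, A0 q = p)) ∧
      (∀ p ∈ Γ2, (A2 p = 0 ↔ ∃ q ∈ Γ1, A1 q = p)))) := by
  -- pointwise versions of the hypotheses
  have hd0' : ∀ x, d1 (d0 x) = 0 := fun x => by
    simpa using LinearMap.congr_fun hd0 x
  have hd1' : ∀ x, d2 (d1 x) = 0 := fun x => by
    simpa using LinearMap.congr_fun hd1 x
  have he0' : ∀ y, e1 (e0 y) = 0 := fun y => by
    simpa using LinearMap.congr_fun he0 y
  have he1' : ∀ y, e2 (e1 y) = 0 := fun y => by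
    simpa using LinearMap.congr_fun he1 y
  have hSd : ∀ x, S1 (Sdag x) = x := fun x => by
    simpa using LinearMap.congr_fun hdag x
  have hdS0 : ∀ y, d1 (S0 y) = -S1 (e0 y) := fun y => by
    simp [hS0, hS1, LinearMap.sub_apply, LinearMap.comp_apply, map_sub,
      hd0', he0']
  have hdS1 : ∀ y, d2 (S1 y) = -S2 (e1 y) := fun y => by
    simp [hS1, hS2, LinearMap.sub_apply, LinearMap.comp_apply, map_sub,
      hd1', he1']
  -- (i)
  have i1 : ∀ p : X0 × Y0, A0 p ∈ Γ1 := by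
    intro p
    simp only [hA0, hΓ1, Set.mem_setOf_eq, map_sub, hd0', hdS0]
    abel
  have i2 : ∀ p ∈ Γ1, A1 p ∈ Γ2 := by
    intro p hp
    rw [hΓ1, Set.mem_setOf_eq] at hp
    simp [hA1, hΓ2, hp]
  -- (ii)
  have ii1 : ∀ p : X1 × Y1, π1 p ∈ Γ1 := by
    intro p
    simp only [hπ1, hΓ1, Set.mem_setOf_eq, map_add, map_sub, hSd]
    abel
  have ii2 : ∀ p ∈ Γ1, π1 p = p := by
    intro p hp
    rw [hΓ1, Set.mem_setOf_eq] at hp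
    simp [hπ1, hp]
  have ii3 : ∀ p : X2 × Y2, π2 p ∈ Γ2 := by
    intro p; simp [hπ2, hΓ2]
  have ii4 : ∀ p ∈ Γ2, π2 p = p := by
    intro p hp
    rw [hΓ2, Set.mem_setOf_eq] at hp
    rw [hπ2]
    ext
    · simp [hp]
    · simp [hp]
  -- (iii)
  have iii1 : ∀ p : X0 × Y0, π1 (A0 p) = A0 p := fun p => ii2 _ (i1 p)
  have iii2 : ∀ p : X1 × Y1, π2 (A1 p) = A1 (π1 p) := by
    intro p
    rw [hπ2, hA1, hπ1, hA1]
    ext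
    · simp only
      rw [map_add, map_sub, hSd, hSd]
      abel
    · simp only [map_add, map_sub]
      abel
  have iii3 : ∀ p : X2 × Y2, A2 (π2 p) = A2 p := by
    intro p
    rw [hπ2, hA2, hA2]
    ext
    · simp only
      have h := hdS1 (Sdag p.1)
      rw [hSd] at h
      rw [map_zero, map_add, h]
      abel
    · simp only [map_add, he1']
      abel
  -- A1 ∘ A0 = 0 and A2 ∘ A1 = 0
  have hA2A1 : ∀ p : X1 × Y1, A2 (A1 p) = 0 := by
    intro p
    rw [hA1, hA2]
    ext
    · simp only
      rw [map_sub, hd1', hdS1]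
      simp
    · simp [he1']
  constructor
  · exact ⟨i1, i2⟩
  constructor
  · exact ⟨ii1, ii2, ii3, ii4⟩
  constructor
  · exact ⟨iii1, iii2, iii3⟩
  · intro hex1 hex2
    constructor
    · intro p _; exact hex1 p
    · intro p hp
      constructor
      · intro h0
        obtain ⟨q, hq⟩ := (hex2 p).mp h0
        refine ⟨π1 q, ii1 q, ?_⟩
        rw [← iii2, hq, ii4 p hp]
      · rintro ⟨q, _, rfl⟩
        exact hA2A1 q
end
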